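/- arXiv:2602.06073 — 7 statements merged into one kernel-verified Lean document; each statement's English description precedes it below -/
import Mathlib

section
/- The positive integers n for which 2ⁿ − 7 is a perfect square are exactly n ∈ {3, 4, 5, 7, 15}. Equivalently, the set of pairs (z, n) of positive integers with z² + 7 = 2ⁿ is exactly {(1,3), (3,4), (5,5), (11,7), (181,15)}. -/
namespace RN

def Yaux : ℕ → ℤ × ℤ
  | 0 => (0, 1)
  | n+1 => ((Yaux n).2, (Yaux n).2 - 2 * (Yaux n).1)

def Y (n : ℕ) : ℤ := (Yaux n).1

def X (n : ℕ) : ℤ := 2 * Y (n+1) - Y n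

lemma Y0 : Y 0 = 0 := rfl
lemma Y1 : Y 1 = 1 := rfl
lemma Yrec (n : ℕ) : Y (n+2) = Y (n+1) - 2 * Y n := rfl

lemma half1 (n : ℕ) : X n + Y n = 2 * Y (n+1) := by simp only [X]; ring

lemma half2 (n : ℕ) : X n - 7 * Y n = 2 * X (n+1) := by
  simp only [X, Yrec]; ring

lemma norm_eq (n : ℕ) : X n ^ 2 + 7 * Y n ^ 2 = 2 ^ (n+2) := by
  induction n with
  | zero => decide
  | succ n ih =>
    have h1 := half1 n
    have h2 := half2 n
    have key : 4 * (X (n+1) ^ 2 + 7 * Y (n+1) ^ 2) = 4 * 2 ^ (n+1+2) := by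
      have : (2 * X (n+1))^2 + 7 * (2 * Y (n+1))^2 = 8 * (X n ^2 + 7 * Y n ^2) := by
        rw [← h1, ← h2]; ring
      rw [ih] at this
      have e : (8:ℤ) * 2 ^ (n+2) = 4 * 2 ^ (n+1+2) := by ring
      rw [e] at this
      linarith [this]
    exact mul_left_cancel₀ (by norm_num : (4:ℤ) ≠ 0) key

lemma Yodd_aux (n : ℕ) : Y (n+1) % 2 = 1 ∧ Y (n+2) % 2 = 1 := by
  induction n with
  | zero => decide
  | succ n ih =>
    obtain ⟨h1, h2⟩ := ih
    refine ⟨h2, ?_⟩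
    have h3 : Y (n+1+2) = Y (n+1+1) - 2 * Y (n+1) := Yrec (n+1)
    have h4 : Y (n+1+1) = Y (n+2) := rfl
    omega

lemma Yodd (n : ℕ) (h : 1 ≤ n) : Odd (Y n) := by
  obtain ⟨k, rfl⟩ : ∃ k, n = k + 1 := ⟨n - 1, by omega⟩
  have := (Yodd_aux k).1
  exact Int.odd_iff.2 this

lemma Xodd (n : ℕ) (h : 1 ≤ n) : Odd (X n) := by
  have h1 := Yodd (n+1) (by omega)
  have h2 := Yodd n h
  simp only [X]
  rcases h1 with ⟨a, ha⟩; rcases h2 with ⟨b, hb⟩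
  exact ⟨2*a - b, by omega⟩

lemma Ymod8 (k : ℕ) : Y (3 + 2*k) % 8 = 7 ∧ Y (4 + 2*k) % 8 = 5 := by
  induction k with
  | zero => decide
  | succ k ih =>
    obtain ⟨h1, h2⟩ := ih
    have r1 := Yrec (3 + 2*k)
    have r2 := Yrec (4 + 2*k)
    have i1 : 3+2*k+2 = 5+2*k := by omega
    have i2 : 3+2*k+1 = 4+2*k := by omega
    have i3 : 4+2*k+2 = 6+2*k := by omega
    have i4 : 4+2*k+1 = 5+2*k := by omega
    rw [i1, i2] at r1
    rw [i3, i4] at r2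
    have g1 : 3+2*(k+1) = 5+2*k := by omega
    have g2 : 4+2*(k+1) = 6+2*k := by omega
    rw [g1, g2]
    omega

/-- Addition formulas. -/
lemma addf (j k : ℕ) : 2 * Y (j + k) = X j * Y k + Y j * X k ∧
    2 * X (j + k) = X j * X k - 7 * Y j * Y k := by
  induction k with
  | zero => constructor <;> simp [Y0, show X 0 = 2 from rfl] <;> ring
  | succ k ih =>
    obtain ⟨h1, h2⟩ := ih
    have a1 := half1 k
    have a2 := half2 k
    have b1 := half1 (j + k)
    have b2 := half2 (j + k)
    have e : j + (k+1) = (j + k) + 1 := by omega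
    rw [e]
    constructor
    · have : 2 * (2 * Y ((j+k)+1)) = 2 * (X j * Y (k+1) + Y j * X (k+1)) := by
        rw [← b1]
        calc 2 * (X (j+k) + Y (j+k)) = (2 * X (j+k)) + (2 * Y (j+k)) := by ring
        _ = (X j * X k - 7 * Y j * Y k) + (X j * Y k + Y j * X k) := by rw [h1, h2]
        _ = X j * (X k + Y k) + Y j * (X k - 7 * Y k) := by ring
        _ = X j * (2 * Y (k+1)) + Y j * (2 * X (k+1)) := by rw [a1, a2]
        _ = 2 * (X j * Y (k+1) + Y j * X (k+1)) := by ring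
      exact mul_left_cancel₀ (by norm_num : (2:ℤ) ≠ 0) this
    · have : 2 * (2 * X ((j+k)+1)) = 2 * (X j * X (k+1) - 7 * Y j * Y (k+1)) := by
        rw [← b2]
        calc 2 * (X (j+k) - 7 * Y (j+k)) = (2 * X (j+k)) - 7 * (2 * Y (j+k)) := by ring
        _ = (X j * X k - 7 * Y j * Y k) - 7 * (X j * Y k + Y j * X k) := by rw [h1, h2]
        _ = X j * (X k - 7 * Y k) - 7 * Y j * (X k + Y k) := by ring
        _ = X j * (2 * X (k+1)) - 7 * Y j * (2 * Y (k+1)) := by rw [a1, a2]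
        _ = 2 * (X j * X (k+1) - 7 * Y j * Y (k+1)) := by ring
      exact mul_left_cancel₀ (by norm_num : (2:ℤ) ≠ 0) this

lemma one_le_sq_of_odd (a : ℤ) (h : Odd a) : 1 ≤ a^2 := by
  rcases h with ⟨c, rfl⟩
  rcases le_or_gt 0 c with hc | hc
  · nlinarith
  · nlinarith

lemma sq_parity (a : ℤ) : a^2 % 2 = a % 2 := by
  rcases Int.even_or_odd a with ⟨p, hp⟩ | ⟨p, hp⟩ <;> subst hp <;>
    [ (have : (p+p)^2 = 4*p^2 := by ring);
      (have : (2*p+1)^2 = 4*p^2+4*p+1 := by ring) ] <;> omega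

lemma descent_step (m : ℕ) (hm : 1 ≤ m)
    (IH : ∀ a b : ℤ, Odd a → Odd b → a^2 + 7*b^2 = 2^(m+2) →
      a^2 = X m ^2 ∧ b^2 = Y m ^2)
    (a b : ℤ) (ha : Odd a) (hb : Odd b) (h4 : (4:ℤ) ∣ b - a)
    (he : a^2 + 7*b^2 = 2^(m+3)) :
    a^2 = X (m+1) ^2 ∧ b^2 = Y (m+1) ^2 := by
  obtain ⟨k, hk⟩ := h4
  have hba : b = a + 4*k := by omega
  subst hba
  set a' : ℤ := 2*(a + 4*k) - k with ha'
  have claim1 : a'^2 + 7*k^2 = 2^(m+2) := by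
    have h2 : (2:ℤ) * (a'^2 + 7*k^2) = 2 * 2^(m+2) := by
      have e : (2:ℤ) * 2^(m+2) = 2^(m+3) := by ring
      rw [e, ← he]; ring
    exact mul_left_cancel₀ (by norm_num) h2
  -- a' and k are both odd
  have hodd : Odd a' ∧ Odd k := by
    by_contra hcon
    -- a' + k = 2*(a+4*k) is even, so a' and k have the same parity; both even
    have hsame : a' % 2 = k % 2 := by omega
    have hae : a' % 2 = 0 := by
      rcases ha with ⟨c, hc⟩
      rcases Int.even_or_odd a' with ⟨p, hp⟩ | ⟨p, hp⟩
      · omega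
      · exfalso; apply hcon
        constructor
        · exact ⟨p, hp⟩
        · have : k % 2 = 1 := by omega
          exact Int.odd_iff.2 this
    obtain ⟨a'', ha''⟩ : (2:ℤ) ∣ a' := by omega
    obtain ⟨k'', hk''⟩ : (2:ℤ) ∣ k := by omega
    have hE : a''^2 + 7*k''^2 = 2^m := by
      have h4' : (4:ℤ) * (a''^2 + 7*k''^2) = 4 * 2^m := by
        have e : (4:ℤ) * 2^m = 2^(m+2) := by ring
        rw [e, ← claim1, ha'', hk'']; ring
      exact mul_left_cancel₀ (by norm_num) h4'
    -- a = a'' - 7*k'' so a''+k'' is odd, hence a''^2+7k''^2 odd; but 2^m is even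
    have haeq : a = a'' - 7*k'' := by omega
    have hodd2 : (a'' + k'') % 2 = 1 := by
      rcases ha with ⟨c, hc⟩; omega
    have hp1 := sq_parity a''
    have hp2 := sq_parity k''
    have heven : (2:ℤ) ∣ 2^m := dvd_pow_self 2 (by omega)
    omega
  obtain ⟨hoa, hok⟩ := hodd
  obtain ⟨hX, hY⟩ := IH a' k hoa hok claim1
  have ca : 2*a = a' - 7*k := by omega
  have cb : 2*(a + 4*k) = a' + k := by omega
  have sa : (a' - X m) * (a' + X m) = 0 := by linear_combination hX
  have sk : (k - Y m) * (k + Y m) = 0 := by linear_combination hY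
  have h2' := half2 m
  have h1' := half1 m
  have hXo := Xodd (m+1) (by omega)
  have hYo := Yodd m hm
  rcases mul_eq_zero.1 sa with e1 | e1 <;> rcases mul_eq_zero.1 sk with e2 | e2
  · -- a' = X m, k = Y m
    have eqa : a = X (m+1) := by linarith
    have eqb : a + 4*k = Y (m+1) := by linarith
    exact ⟨by rw [eqa], by rw [eqb]⟩
  · -- a' = X m, k = -Y m : contradiction with a odd
    exfalso
    have : a = X (m+1) + 7 * Y m := by linarith
    rcases hXo with ⟨p, hp⟩; rcases hYo with ⟨q, hq⟩; rcases ha with ⟨c, hc⟩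
    omega
  · -- a' = -X m, k = Y m : contradiction
    exfalso
    have : a = -(X (m+1) + 7 * Y m) := by linarith
    rcases hXo with ⟨p, hp⟩; rcases hYo with ⟨q, hq⟩; rcases ha with ⟨c, hc⟩
    omega
  · -- a' = -X m, k = -Y m
    have eqa : a = -X (m+1) := by linarith
    have eqb : a + 4*k = -Y (m+1) := by linarith
    constructor
    · linear_combination (a - X (m+1)) * eqa
    · linear_combination (a + 4*k - Y (m+1)) * eqb

lemma classify : ∀ m, 1 ≤ m → ∀ a b : ℤ, Odd a → Odd b →
    a^2 + 7*b^2 = 2^(m+2) → a^2 = X m ^2 ∧ b^2 = Y m ^2 := by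
  intro m hm
  induction m, hm using Nat.le_induction with
  | base =>
    intro a b ha hb he
    have h1 := one_le_sq_of_odd a ha
    have h2 := one_le_sq_of_odd b hb
    have hX1 : X 1 = 1 := by decide
    have hY1 : Y 1 = 1 := by decide
    rw [hX1, hY1]
    norm_num at he
    constructor <;> nlinarith [h1, h2, he]
  | succ m hm IH =>
    intro a b ha hb he
    have hcase : (4:ℤ) ∣ b - a ∨ (4:ℤ) ∣ (-b) - a := by
      rcases ha with ⟨c, hc⟩; rcases hb with ⟨d, hd⟩; omega
    rcases hcase with h4 | h4
    · exact descent_step m hm IH a b ha hb h4 he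
    · have hb' : Odd (-b) := hb.neg
      have he' : a^2 + 7*(-b)^2 = 2^(m+3) := by rw [← he]; ring
      obtain ⟨g1, g2⟩ := descent_step m hm IH a (-b) ha hb' h4 he'
      exact ⟨g1, by rw [← g2]; ring⟩

/-! ## The ring ℤ√-7 -/

open Zsqrtd

abbrev R7 := ℤ√(-7)

def sq7 : R7 := sqrtd

def xel : R7 := ⟨-5, -1⟩

lemma s_mul_s : sq7 * sq7 = ((-7 : ℤ) : R7) := dmuld

lemma seven_eq : (7 : R7) = -(sq7^2) := by
  rw [sq, s_mul_s]
  ext <;> simp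

lemma sdvd (r : R7) : sq7 ∣ r ↔ (7:ℤ) ∣ r.re := by
  constructor
  · rintro ⟨c, rfl⟩
    rw [re_mul]
    simp [sq7]
  · intro ⟨w, hw⟩
    refine ⟨⟨r.im, -w⟩, ?_⟩
    ext
    · show r.re = 0 * r.im + (-7) * 1 * (-w)
      omega
    · show r.im = 0 * (-w) + 1 * r.im
      ring

lemma prime7 : Prime (7:ℤ) := by norm_num

lemma not_sdvd_mul {r q : R7} (hr : ¬ sq7 ∣ r) (hq : ¬ sq7 ∣ q) : ¬ sq7 ∣ (r * q) := by
  rw [sdvd] at *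
  rw [re_mul]
  intro hd
  have h1 : (7:ℤ) ∣ r.re * q.re := by
    have : (7:ℤ) ∣ (-7) * r.im * q.im := ⟨-(r.im * q.im), by ring⟩
    omega
  rcases (Int.Prime.dvd_mul' (by norm_num : Nat.Prime 7) h1) with h | h <;> tauto

lemma not_sdvd_xel_pow (k : ℕ) : ¬ sq7 ∣ xel^k := by
  induction k with
  | zero =>
    rw [pow_zero, sdvd]
    norm_num
  | succ k ih =>
    rw [pow_succ]
    apply not_sdvd_mul ih
    rw [sdvd]
    norm_num [xel]

lemma xel_eq : xel = ((-5 : ℤ) : R7) + ((-1 : ℤ) : R7) * sq7 := by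
  ext <;> simp [xel, sq7]

/-- `xel^D = 2^(D-1) * (X(3D) + Y(3D)√-7)`. -/
lemma xel_pow (D : ℕ) (hD : 1 ≤ D) :
    xel^D = (2:R7)^(D-1) * (((X (3*D) : ℤ) : R7) + ((Y (3*D) : ℤ) : R7) * sq7) := by
  induction D, hD using Nat.le_induction with
  | base =>
    have e1 : X 3 = -5 := by decide
    have e2 : Y 3 = -1 := by decide
    norm_num [e1, e2, xel_eq]
  | succ D hD ih =>
    have key := addf (3*D) 3
    have i1 : 3*D + 3 = 3*(D+1) := by omega
    rw [i1] at key
    obtain ⟨k1, k2⟩ := key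
    have e1 : X 3 = -5 := by decide
    have e2 : Y 3 = -1 := by decide
    rw [e1, e2] at k1 k2
    have c1 : ((2:ℤ) * Y (3*(D+1)) : ℤ) = (X (3*D) * (-1) + Y (3*D) * (-5) : ℤ) := k1
    have c2 : ((2:ℤ) * X (3*(D+1)) : ℤ) = (X (3*D) * (-5) - 7 * Y (3*D) * (-1) : ℤ) := k2
    have d1 : ((2 : R7) * ((Y (3*(D+1)) : ℤ) : R7))
        = ((X (3*D) : ℤ) : R7) * (-1) + ((Y (3*D) : ℤ) : R7) * (-5) := by
      exact_mod_cast congrArg (fun z : ℤ => (z : R7)) c1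
    have d2 : ((2 : R7) * ((X (3*(D+1)) : ℤ) : R7))
        = ((X (3*D) : ℤ) : R7) * (-5) - 7 * ((Y (3*D) : ℤ) : R7) * (-1) := by
      exact_mod_cast congrArg (fun z : ℤ => (z : R7)) c2
    have hs : sq7 * sq7 = ((-7 : ℤ) : R7) := s_mul_s
    have hs' : sq7 * sq7 = ((-7) : R7) := by rw [hs]; push_cast; ring
    have hD1 : D + 1 - 1 = D := by omega
    have hDD : D - 1 + 1 = D := by omega
    have h2p : (2:R7)^(D+1-1) = (2:R7)^(D-1) * 2 := by
      rw [hD1]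
      conv_lhs => rw [← hDD]
      rw [pow_succ]
    rw [pow_succ, ih, xel_eq, h2p]
    linear_combination (-((2:R7)^(D-1))) * sq7 * d1 + (-((2:R7)^(D-1))) * d2
      + ((2:R7)^(D-1) * ((Y (3*D) : ℤ) : R7) * (-1)) * hs'

/-- Lifting the exponent: the 7-adic valuation of `xel^D - 2^D` is odd. -/
lemma lte : ∀ D : ℕ, 1 ≤ D → ∃ t : ℕ, ∃ g : R7,
    xel^D - 2^D = sq7^(2*t+1) * g ∧ ¬ sq7 ∣ g := by
  intro D
  induction D using Nat.strong_induction_on with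
  | _ D IH =>
    intro hD
    by_cases h7 : 7 ∣ D
    · obtain ⟨E, rfl⟩ := h7
      have hE : 1 ≤ E := by omega
      obtain ⟨t, g, heq, hg⟩ := IH E (by omega) hE
      set u := xel^E with hu
      have hvu : (2:R7)^E = u - sq7^(2*t+1) * g := by linear_combination -heq
      set G : R7 := -u^6 + 3*sq7^(2*t+1)*u^5*g - 5*sq7^(2*(2*t+1))*u^4*g^2
        + 5*sq7^(3*(2*t+1))*u^3*g^3 - 3*sq7^(4*(2*t+1))*u^2*g^4
        + sq7^(5*(2*t+1))*u*g^5 + sq7^(12*t+4)*g^6 with hG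
      have key : xel^(7*E) - (2:R7)^(7*E) = sq7^(2*(t+1)+1) * (g * G) := by
        have p1 : xel^(7*E) = u^7 := by rw [hu, ← pow_mul, Nat.mul_comm]
        have p2 : (2:R7)^(7*E) = ((2:R7)^E)^7 := by rw [← pow_mul, Nat.mul_comm]
        rw [p1, p2, hvu, hG]
        linear_combination (u^6*sq7^(2*t+1)*g - 3*u^5*sq7^(2*(2*t+1))*g^2
          + 5*u^4*sq7^(3*(2*t+1))*g^3 - 5*u^3*sq7^(4*(2*t+1))*g^4
          + 3*u^2*sq7^(5*(2*t+1))*g^5 - u*sq7^(6*(2*t+1))*g^6) * seven_eq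
      refine ⟨t+1, g*G, key, ?_⟩
      have hGnd : ¬ sq7 ∣ G := by
        intro hdvd
        have hH : G + u^6 = sq7 * (3*sq7^(2*t)*u^5*g - 5*sq7^(4*t+1)*u^4*g^2
            + 5*sq7^(6*t+2)*u^3*g^3 - 3*sq7^(8*t+3)*u^2*g^4
            + sq7^(10*t+4)*u*g^5 + sq7^(12*t+3)*g^6) := by
          rw [hG]; ring
        have : sq7 ∣ u^6 := by
          have h1 : sq7 ∣ G + u^6 := Dvd.intro _ hH.symm
          exact (dvd_add_right hdvd).mp h1
        have : sq7 ∣ xel^(E*6) := by rwa [pow_mul]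
        exact not_sdvd_xel_pow (E*6) this
      exact not_sdvd_mul hg hGnd
    · -- 7 ∤ D : valuation is exactly 1
      have hgeo := geom_sum₂_mul xel (2:R7) D
      set S : R7 := ∑ i ∈ Finset.range D, xel^i * (2:R7)^(D-1-i) with hS
      have hx2 : xel - 2 = sq7 * (⟨-1, 1⟩ : R7) := by
        ext
        · show (xel - 2).re = 0 * (-1) + (-7) * 1 * 1
          simp [xel]
        · show (xel - 2).im = 0 * 1 + 1 * (-1)
          simp [xel]
      refine ⟨0, (⟨-1, 1⟩ : R7) * S, ?_, ?_⟩
      · rw [← hgeo, hx2]; ring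
      · have hSd : sq7 ∣ S - (D : R7) * xel^(D-1) := by
          have e1 : (D : R7) * xel^(D-1) = ∑ _i ∈ Finset.range D, xel^(D-1) := by
            rw [Finset.sum_const, Finset.card_range, nsmul_eq_mul]
          rw [e1, ← Finset.sum_sub_distrib]
          apply Finset.dvd_sum
          intro i hi
          have hiD : i + (D-1-i) = D - 1 := by
            have := Finset.mem_range.mp hi; omega
          have e : xel^(D-1) = xel^i * xel^(D-1-i) := by
            rw [← pow_add, hiD]
          rw [e]
          have e2 : xel^i * (2:R7)^(D-1-i) - xel^i * xel^(D-1-i)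
              = xel^i * ((2:R7)^(D-1-i) - xel^(D-1-i)) := by ring
          rw [e2]
          apply Dvd.dvd.mul_left
          have hd2 : sq7 ∣ (2:R7) - xel := by
            have : (2:R7) - xel = sq7 * (-(⟨-1,1⟩ : R7)) := by
              rw [mul_neg, ← hx2]; ring
            exact Dvd.intro _ this.symm
          exact dvd_trans hd2 (sub_dvd_pow_sub_pow _ _ _)
        have hnd1 : ¬ sq7 ∣ (⟨-1,1⟩ : R7) := by rw [sdvd]; norm_num
        have hnd2 : ¬ sq7 ∣ S := by
          intro hScon
          have hdd : sq7 ∣ (D : R7) * xel^(D-1) := by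
            have : (D : R7) * xel^(D-1) = S - (S - (D : R7) * xel^(D-1)) := by ring
            rw [this]
            exact dvd_sub hScon hSd
          rw [sdvd, re_mul, re_natCast, im_natCast] at hdd
          have hre : ¬ (7:ℤ) ∣ (xel^(D-1)).re := by
            have := not_sdvd_xel_pow (D-1)
            rwa [sdvd] at this
          have h1 : (7:ℤ) ∣ (D:ℤ) * (xel^(D-1)).re := by
            have : (-7:ℤ) * 0 * (xel ^ (D - 1)).im = 0 := by ring
            omega
          rcases Int.Prime.dvd_mul' (by norm_num : Nat.Prime 7) h1 with h | h
          · exact h7 (Int.natCast_dvd_natCast.mp (by exact_mod_cast h))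
          · exact hre h
        exact not_sdvd_mul hnd1 hnd2

lemma two_pow_im (k : ℕ) : ((2:R7)^k).im = 0 := by
  induction k with
  | zero => simp
  | succ k ih =>
    rw [pow_succ, Zsqrtd.im_mul]
    have h1 : ((2:R7)).re = 2 := rfl
    have h2 : ((2:R7)).im = 0 := rfl
    rw [h1, h2, ih]
    ring

lemma two_pow_re (k : ℕ) : ((2:R7)^k).re = 2^k := by
  induction k with
  | zero => simp
  | succ k ih =>
    rw [pow_succ, Zsqrtd.re_mul]
    have h1 : ((2:R7)).re = 2 := rfl
    have h2 : ((2:R7)).im = 0 := rfl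
    rw [h1, h2, two_pow_im, ih, pow_succ]
    ring

lemma norm_spow (k : ℕ) : (sq7^k).norm = 7^k := by
  induction k with
  | zero => simp
  | succ k ih =>
    have hs : sq7.norm = 7 := by simp [Zsqrtd.norm_def, sq7]
    rw [pow_succ, Zsqrtd.norm_mul, ih, hs, pow_succ]

lemma seven_not_dvd_norm {g : R7} (hg : ¬ sq7 ∣ g) : ¬ (7:ℤ) ∣ g.norm := by
  rw [sdvd] at hg
  rw [Zsqrtd.norm_def]
  intro hd
  have h1 : (7:ℤ) ∣ g.re * g.re := by
    have : (7:ℤ) ∣ (-7) * g.im * g.im := ⟨-(g.im * g.im), by ring⟩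
    omega
  rcases Int.Prime.dvd_mul' (by norm_num : Nat.Prime 7) h1 with h | h <;> exact hg h

/-- valuation-parity contradiction over ℤ -/
lemma val7 : ∀ (n : ℕ) (y : ℤ), y.natAbs ≤ n → y ≠ 0 → ∀ (j t : ℕ) (w : ℤ),
    ¬ (7:ℤ) ∣ w → 2^j * y^2 = 7^(2*t+1) * w → False := by
  intro n
  induction n with
  | zero => intro y hy hy0 _ _ _ _ _; omega
  | succ n ih =>
    intro y hy hy0 j t w hw heq
    by_cases h7 : (7:ℤ) ∣ y
    · obtain ⟨z, rfl⟩ := h7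
      have hz0 : z ≠ 0 := by rintro rfl; simp at hy0
      have hzn : z.natAbs ≤ n := by
        have h1 : (7*z).natAbs = 7 * z.natAbs := by
          rw [Int.natAbs_mul]; rfl
        have h2 : 1 ≤ z.natAbs := by omega
        omega
      cases t with
      | zero =>
        exfalso
        apply hw
        have hcan : 7 * (7 * (2^j * z^2)) = 7 * w := by linear_combination heq
        have : 7 * (2^j * z^2) = w := mul_left_cancel₀ (by norm_num) hcan
        exact ⟨2^j * z^2, this.symm⟩
      | succ t' =>
        apply ih z hzn hz0 j t' w hw
        have hcan : (49:ℤ) * (2^j * z^2) = 49 * (7^(2*t'+1) * w) := by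
          linear_combination heq
        exact mul_left_cancel₀ (by norm_num) hcan
    · have hdvd : (7:ℤ) ∣ 2^j * y^2 := by
        rw [heq]
        exact Dvd.dvd.mul_right ⟨7^(2*t), by ring⟩ w
      rcases Int.Prime.dvd_mul' (by norm_num : Nat.Prime 7) hdvd with h | h
      · have := Int.Prime.dvd_pow' (p := 7) (by norm_num) h
        norm_num at this
      · rcases Int.Prime.dvd_mul' (by norm_num : Nat.Prime 7) (by rwa [sq] at h) with h' | h' <;>
          exact h7 h'

/-- The main 7-adic contradiction: no two indices `m' < m'+d` with `3 ∣ d`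
can both have `Y = -1`. -/
lemma no_big (m' d : ℕ) (hd3 : 3 ∣ d) (hd1 : 1 ≤ d)
    (h1 : Y m' = -1) (h2 : Y (m' + d) = -1) : False := by
  obtain ⟨D, rfl⟩ := hd3
  have hD1 : 1 ≤ D := by omega
  have hadd := (addf m' (3*D)).1
  rw [h1, h2] at hadd
  have e1 : X m' * Y (3*D) = X (3*D) - 2 := by linarith
  have nm' := norm_eq m'
  rw [h1] at nm'
  have nd := norm_eq (3*D)
  have hI : 2^(m'+2) * Y (3*D)^2 = 2^(3*D+2) + 4 - 4 * X (3*D) := by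
    linear_combination (-(Y (3*D)^2)) * nm' + (X m' * Y (3*D) + X (3*D) - 2) * e1 + nd
  have hA : (X (3*D) - 2)^2 + 7 * Y (3*D)^2 = 2^(m'+2) * Y (3*D)^2 := by
    linear_combination nd - hI
  obtain ⟨t, g, heq, hg⟩ := lte D hD1
  rw [xel_pow D hD1] at heq
  -- identify the element componentwise
  have hw : (2:R7)^(D-1) * (((X (3*D) : ℤ) : R7) + ((Y (3*D) : ℤ) : R7) * sq7) - 2^D
      = (⟨2^(D-1) * (X (3*D) - 2), 2^(D-1) * Y (3*D)⟩ : R7) := by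
    have hD' : D - 1 + 1 = D := by omega
    have c1 : ((2:R7)^D).re = 2^(D-1) * 2 := by
      rw [two_pow_re]
      conv_lhs => rw [← hD']
      rw [pow_succ]
    have c2 : ((2:R7)^D).im = 0 := two_pow_im D
    ext
    · rw [Zsqrtd.re_sub, Zsqrtd.re_mul, c1, two_pow_re, two_pow_im]
      rw [Zsqrtd.re_add, Zsqrtd.im_add, Zsqrtd.re_mul, Zsqrtd.im_mul]
      simp [sq7]
      try ring
    · rw [Zsqrtd.im_sub, Zsqrtd.im_mul, c2, two_pow_re, two_pow_im]
      rw [Zsqrtd.re_add, Zsqrtd.im_add, Zsqrtd.re_mul, Zsqrtd.im_mul]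
      simp [sq7]
      try ring
  rw [hw] at heq
  have hnorm := congrArg Zsqrtd.norm heq
  rw [Zsqrtd.norm_mul, norm_spow] at hnorm
  have hnormL : (⟨2^(D-1) * (X (3*D) - 2), 2^(D-1) * Y (3*D)⟩ : R7).norm
      = (2^(D-1))^2 * ((X (3*D) - 2)^2 + 7 * Y (3*D)^2) := by
    rw [Zsqrtd.norm_def]
    ring
  rw [hnormL, hA] at hnorm
  -- hnorm : (2^(D-1))^2 * (2^(m'+2) * Y(3D)^2) = 7^(2t+1) * g.norm
  have hfin : 2^((D-1)*2+(m'+2)) * Y (3*D)^2 = 7^(2*t+1) * g.norm := by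
    have e : (2:ℤ)^((D-1)*2+(m'+2)) = (2^(D-1))^2 * 2^(m'+2) := by
      rw [pow_add, pow_mul]
    rw [e]
    linear_combination hnorm
  have hY0 : Y (3*D) ≠ 0 := by
    rcases Yodd (3*D) (by omega) with ⟨c, hc⟩
    omega
  exact val7 (Y (3*D)).natAbs (Y (3*D)) le_rfl hY0 _ t g.norm (seven_not_dvd_norm hg) hfin

lemma Y_eq_one (m : ℕ) (h : Y m = 1) : m = 1 ∨ m = 2 := by
  by_cases hle : m ≤ 2
  · interval_cases m
    · exact absurd h (by decide)
    · exact Or.inl rfl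
    · exact Or.inr rfl
  · exfalso
    push_neg at hle
    rcases Nat.even_or_odd m with ⟨k, hk⟩ | ⟨k, hk⟩
    · have hm8 := (Ymod8 (k - 2)).2
      have e : 4 + 2*(k-2) = m := by omega
      rw [e, h] at hm8
      norm_num at hm8
    · have hm8 := (Ymod8 (k - 1)).1
      have e : 3 + 2*(k-1) = m := by omega
      rw [e, h] at hm8
      norm_num at hm8

lemma Y_eq_negone (m : ℕ) (h : Y m = -1) : m = 3 ∨ m = 5 ∨ m = 13 := by
  by_cases hle : m ≤ 13
  · interval_cases m <;> revert h <;> decide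
  · exfalso
    push_neg at hle
    have h3 : m % 3 = 0 ∨ m % 3 = 1 ∨ m % 3 = 2 := by omega
    rcases h3 with h3 | h3 | h3
    · refine no_big 3 (m - 3) (by omega) (by omega) (by decide) ?_
      have e : 3 + (m - 3) = m := by omega
      rw [e]; exact h
    · refine no_big 13 (m - 13) (by omega) (by omega) (by decide) ?_
      have e : 13 + (m - 13) = m := by omega
      rw [e]; exact h
    · refine no_big 5 (m - 5) (by omega) (by omega) (by decide) ?_
      have e : 5 + (m - 5) = m := by omega
      rw [e]; exact h

lemma Ysq (m : ℕ) (h : Y m ^ 2 = 1) : m = 1 ∨ m = 2 ∨ m = 3 ∨ m = 5 ∨ m = 13 := by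
  have h0 : (Y m - 1) * (Y m + 1) = 0 := by linear_combination h
  rcases mul_eq_zero.1 h0 with h1 | h1
  · rcases Y_eq_one m (by linarith) with h2 | h2
    · exact Or.inl h2
    · exact Or.inr (Or.inl h2)
  · rcases Y_eq_negone m (by linarith) with h2 | h2 | h2
    · exact Or.inr (Or.inr (Or.inl h2))
    · exact Or.inr (Or.inr (Or.inr (Or.inl h2)))
    · exact Or.inr (Or.inr (Or.inr (Or.inr h2)))

lemma sq_nat (z c : ℕ) (h : (z:ℤ)^2 = (c:ℤ)^2) : z = c := by
  have h0 : ((z:ℤ) - c) * ((z:ℤ) + c) = 0 := by linear_combination h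
  rcases mul_eq_zero.1 h0 with h1 | h1 <;> omega

end RN

open RN in
/-- The Ramanujan–Nagell theorem: the positive integer solutions of `z² + 7 = 2ⁿ`
are exactly `(1,3), (3,4), (5,5), (11,7), (181,15)`. -/
theorem ramanujan_nagell :
    {p : ℕ × ℕ | 0 < p.1 ∧ 0 < p.2 ∧ p.1 ^ 2 + 7 = 2 ^ p.2} =
      {(1, 3), (3, 4), (5, 5), (11, 7), (181, 15)} := by
  ext ⟨z, n⟩
  simp only [Set.mem_setOf_eq, Set.mem_insert_iff, Set.mem_singleton_iff, Prod.mk.injEq]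
  constructor
  · rintro ⟨hz, hn, he⟩
    have hn3 : 3 ≤ n := by
      by_contra hcon
      push_neg at hcon
      have h7 : 7 ≤ z^2 + 7 := by omega
      have h4 : (2:ℕ)^n ≤ 2^2 := Nat.pow_le_pow_right (by norm_num) (by omega)
      have : (2:ℕ)^2 = 4 := by norm_num
      omega
    obtain ⟨m, rfl⟩ : ∃ m, n = m + 2 := ⟨n - 2, by omega⟩
    have hm : 1 ≤ m := by omega
    -- z is odd
    have hzo : ¬ (2 ∣ z) := by
      intro ⟨w, hw⟩
      subst hw
      have e1 : (2*w)^2 = 4*w^2 := by ring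
      have e2 : (2:ℕ)^(m+2) = 4*2^m := by ring
      rw [e1, e2] at he
      have h2 : 2 ∣ 2^m := dvd_pow_self 2 (by omega)
      obtain ⟨q, hq⟩ := h2
      rw [hq] at he
      omega
    have heZ : (z:ℤ)^2 + 7 = 2^(m+2) := by
      have := congrArg (fun a : ℕ => (a : ℤ)) he
      push_cast at this
      exact this
    have hzoZ : Odd (z:ℤ) := by
      rw [Int.odd_iff]
      omega
    obtain ⟨hx2, hy2⟩ := classify m hm (z:ℤ) 1 hzoZ ⟨0, by ring⟩ (by linear_combination heZ)
    have hYm : Y m ^ 2 = 1 := by linear_combination -hy2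
    rcases Ysq m hYm with rfl | rfl | rfl | rfl | rfl
    · left
      refine ⟨?_, rfl⟩
      exact sq_nat z 1 (by rw [hx2]; decide)
    · right; left
      refine ⟨?_, rfl⟩
      exact sq_nat z 3 (by rw [hx2]; decide)
    · right; right; left
      refine ⟨?_, rfl⟩
      exact sq_nat z 5 (by rw [hx2]; decide)
    · right; right; right; left
      refine ⟨?_, rfl⟩
      exact sq_nat z 11 (by rw [hx2]; decide)
    · right; right; right; right
      refine ⟨?_, rfl⟩
      exact sq_nat z 181 (by rw [hx2]; decide)
  · rintro (⟨rfl, rfl⟩ | ⟨rfl, rfl⟩ | ⟨rfl, rfl⟩ | ⟨rfl, rfl⟩ | ⟨rfl, rfl⟩) <;>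
      refine ⟨by norm_num, by norm_num, by norm_num⟩
end

section
/- Let a, b, c be distinct rational numbers and let X, Y be rational numbers with Y ≠ 0 and Y² = (X + a)(X + b)(X + c). Define λ = ((X+a)(X+b) + (X+a)(X+c) + (X+b)(X+c)) / (2Y) and X₂ = λ² − (a + b + c + 2X). Then each of the three numbers X₂ + a, X₂ + b and X₂ + c is the square of a rational number. -/
/-- 2-descent doubling identity: if `Y² = (X+a)(X+b)(X+c)` with `a, b, c` distinct
rationals and `Y ≠ 0`, then the doubled `x`-coordinate
`X₂ = λ² − (a + b + c + 2X)` makes `X₂ + a`, `X₂ + b`, `X₂ + c` all rational squares. -/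
theorem doubling_gives_squares
    (a b c X Y : ℚ) (hab : a ≠ b) (hac : a ≠ c) (hbc : b ≠ c) (hY : Y ≠ 0)
    (hcurve : Y ^ 2 = (X + a) * (X + b) * (X + c))
    (l X₂ : ℚ)
    (hl : l = ((X + a) * (X + b) + (X + a) * (X + c) + (X + b) * (X + c)) / (2 * Y))
    (hX₂ : X₂ = l ^ 2 - (a + b + c + 2 * X)) :
    (∃ r : ℚ, X₂ + a = r ^ 2) ∧ (∃ s : ℚ, X₂ + b = s ^ 2) ∧ (∃ t : ℚ, X₂ + c = t ^ 2) := by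
  subst hX₂ hl
  refine ⟨⟨((X + a) * (X + b) + (X + a) * (X + c) - (X + b) * (X + c)) / (2 * Y), ?_⟩,
    ⟨((X + b) * (X + a) + (X + b) * (X + c) - (X + a) * (X + c)) / (2 * Y), ?_⟩,
    ⟨((X + c) * (X + a) + (X + c) * (X + b) - (X + a) * (X + b)) / (2 * Y), ?_⟩⟩
  · field_simp
    linear_combination (-4 * (2 * X + b + c)) * hcurve
  · field_simp
    linear_combination (-4 * (2 * X + a + c)) * hcurve
  · field_simp
    linear_combination (-4 * (2 * X + a + b)) * hcurve
end

section
/- Let B ≥ 2 be an integer and let n₁ < n₂ < n₃ be nonnegative integers with n₃ ≤ n₁ + n₂ and n₁ + n₂ + n₃ even. Define D = B^{n₁+n₂−n₃} + B^{n₁+n₃−n₂} + B^{n₂+n₃−n₁} − 2·B^{n₁} − 2·B^{n₂} − 2·B^{n₃}. Then for each i ∈ {1, 2, 3} the integer D + 4·B^{nᵢ} is a perfect square; explicitly, D + 4·B^{n₁} = (u + v − w)², D + 4·B^{n₂} = (u − v + w)², D + 4·B^{n₃} = (−u + v + w)², where u = B^{(n₁+n₂−n₃)/2}, v = B^{(n₁+n₃−n₂)/2},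 w = B^{(n₂+n₃−n₁)/2}. Hence the equation z² = D + 4·Bⁿ has at least three solutions in nonnegative integers. -/
/-- Triple-solution construction: for `B ≥ 2` and `n₁ < n₂ < n₃` with `n₃ ≤ n₁ + n₂`
and `n₁ + n₂ + n₃` even, the value
`D = B^{n₁+n₂−n₃} + B^{n₁+n₃−n₂} + B^{n₂+n₃−n₁} − 2B^{n₁} − 2B^{n₂} − 2B^{n₃}`
makes `D + 4·B^{nᵢ}` a perfect square for `i = 1, 2, 3`, so `z² = D + 4·Bⁿ` has at
least three solutions in nonnegative integers. -/
theorem triple_solution_construction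
    (B : ℤ) (hB : 2 ≤ B) (n₁ n₂ n₃ : ℕ)
    (h12 : n₁ < n₂) (h23 : n₂ < n₃) (h3 : n₃ ≤ n₁ + n₂)
    (heven : Even (n₁ + n₂ + n₃))
    (D : ℤ)
    (hD : D = B ^ (n₁ + n₂ - n₃) + B ^ (n₁ + n₃ - n₂) + B ^ (n₂ + n₃ - n₁)
            - 2 * B ^ n₁ - 2 * B ^ n₂ - 2 * B ^ n₃)
    (u v w : ℤ)
    (hu : u = B ^ ((n₁ + n₂ - n₃) / 2))
    (hv : v = B ^ ((n₁ + n₃ - n₂) / 2))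
    (hw : w = B ^ ((n₂ + n₃ - n₁) / 2)) :
    D + 4 * B ^ n₁ = (u + v - w) ^ 2 ∧
      D + 4 * B ^ n₂ = (u - v + w) ^ 2 ∧
      D + 4 * B ^ n₃ = (-u + v + w) ^ 2 ∧
      3 ≤ {p : ℤ × ℕ | 0 ≤ p.1 ∧ p.1 ^ 2 = D + 4 * B ^ p.2}.encard := by
  obtain ⟨m, hm⟩ := heven
  set a := (n₁ + n₂ - n₃) / 2 with ha
  set b := (n₁ + n₃ - n₂) / 2 with hb
  set c := (n₂ + n₃ - n₁) / 2 with hc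
  have hab : n₁ = a + b := by omega
  have hac : n₂ = a + c := by omega
  have hbc : n₃ = b + c := by omega
  have e1 : n₁ + n₂ - n₃ = a + a := by omega
  have e2 : n₁ + n₃ - n₂ = b + b := by omega
  have e3 : n₂ + n₃ - n₁ = c + c := by omega
  have h1 : D + 4 * B ^ n₁ = (u + v - w) ^ 2 := by
    rw [hD, e1, e2, e3, hab, hac, hbc, hu, hv, hw]
    ring
  have h2 : D + 4 * B ^ n₂ = (u - v + w) ^ 2 := by
    rw [hD, e1, e2, e3, hab, hac, hbc, hu, hv, hw]
    ring
  have h3' : D + 4 * B ^ n₃ = (-u + v + w) ^ 2 := by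
    rw [hD, e1, e2, e3, hab, hac, hbc, hu, hv, hw]
    ring
  refine ⟨h1, h2, h3', ?_⟩
  set S : Set (ℤ × ℕ) := {p : ℤ × ℕ | 0 ≤ p.1 ∧ p.1 ^ 2 = D + 4 * B ^ p.2} with hS
  have hmem1 : (|u + v - w|, n₁) ∈ S := ⟨abs_nonneg _, by rw [sq_abs]; exact h1.symm⟩
  have hmem2 : (|u - v + w|, n₂) ∈ S := ⟨abs_nonneg _, by rw [sq_abs]; exact h2.symm⟩
  have hmem3 : (|-u + v + w|, n₃) ∈ S := ⟨abs_nonneg _, by rw [sq_abs]; exact h3'.symm⟩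
  have hsub : ({(|u + v - w|, n₁), (|u - v + w|, n₂), (|-u + v + w|, n₃)} : Set (ℤ × ℕ)) ⊆ S := by
    intro p hp
    rcases hp with rfl | rfl | rfl
    · exact hmem1
    · exact hmem2
    · exact hmem3
  have hne1 : ((|u + v - w|, n₁) : ℤ × ℕ) ∉
      ({(|u - v + w|, n₂), (|-u + v + w|, n₃)} : Set (ℤ × ℕ)) := by
    intro hmm
    rcases hmm with hmm | hmm <;>
      exact absurd (congrArg Prod.snd hmm) (by simp only; omega)
  have hne2 : ((|u - v + w|, n₂) : ℤ × ℕ) ∉ ({(|-u + v + w|, n₃)} : Set (ℤ × ℕ)) := by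
    intro hmm
    exact absurd (congrArg Prod.snd hmm) (by simp only; omega)
  have hcard : ({(|u + v - w|, n₁), (|u - v + w|, n₂), (|-u + v + w|, n₃)} :
      Set (ℤ × ℕ)).encard = 3 := by
    rw [Set.encard_insert_of_notMem hne1, Set.encard_insert_of_notMem hne2,
      Set.encard_singleton]
    rfl
  calc (3 : ℕ∞) = _ := hcard.symm
    _ ≤ S.encard := Set.encard_le_encard hsub
end

section
/- For each n ∈ {6, 7, 8, 10} there exists a nonnegative integer z such that z² = 277665·17⁶ + 34ⁿ. Hence the equation z² = 277665·17⁶ + 34ⁿ of Ramanujan–Nagell type has at least four solutions in nonnegative integers (z, n). -/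
/-- The equation `z² = 277665·17⁶ + 34ⁿ` has a solution for each
`n ∈ {6, 7, 8, 10}`, hence at least four solutions in nonnegative integers. -/
theorem quadruple_solution_277665 :
    (∀ n ∈ ({6, 7, 8, 10} : Set ℕ), ∃ z : ℕ, z ^ 2 = 277665 * 17 ^ 6 + 34 ^ n) ∧
      4 ≤ {p : ℕ × ℕ | p.1 ^ 2 = 277665 * 17 ^ 6 + 34 ^ p.2}.encard := by
  constructor
  · rintro n (rfl | rfl | rfl | rfl)
    · exact ⟨2589151, by norm_num⟩
    · exact ⟨2598977, by norm_num⟩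
    · exact ⟨2913409, by norm_num⟩
    · exact ⟨45509119, by norm_num⟩
  · have hsub : ({(2589151, 6), (2598977, 7), (2913409, 8), (45509119, 10)} : Set (ℕ × ℕ))
        ⊆ {p : ℕ × ℕ | p.1 ^ 2 = 277665 * 17 ^ 6 + 34 ^ p.2} := by
      rintro p (rfl | rfl | rfl | rfl) <;> norm_num
    refine le_trans ?_ (Set.encard_mono hsub)
    rw [Set.encard_insert_of_notMem (by norm_num),
        Set.encard_insert_of_notMem (by norm_num),
        Set.encard_insert_of_notMem (by norm_num),
        Set.encard_singleton]
    norm_num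
end

section
/- Let k ≥ 3 be an integer and define D = 2^{2k} − 6·2^k + 1. Then the equation z² = D + 2ⁿ has at least four solutions in nonnegative integers, namely (z, n) = (2^k − 3, 3), (2^k − 1, k + 2), (2^k + 1, k + 3), (3·2^k − 1, 2k + 3). -/
/-- For `k ≥ 3` and `D = 2^{2k} − 6·2^k + 1`, the equation `z² = D + 2ⁿ` has the
four solutions `(2^k − 3, 3), (2^k − 1, k+2), (2^k + 1, k+3), (3·2^k − 1, 2k+3)`. -/
theorem family_four_solutions
    (k : ℕ) (hk : 3 ≤ k) (D : ℤ) (hD : D = 2 ^ (2 * k) - 6 * 2 ^ k + 1) :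
    ((2 : ℤ) ^ k - 3) ^ 2 = D + 2 ^ 3 ∧
      ((2 : ℤ) ^ k - 1) ^ 2 = D + 2 ^ (k + 2) ∧
      ((2 : ℤ) ^ k + 1) ^ 2 = D + 2 ^ (k + 3) ∧
      (3 * (2 : ℤ) ^ k - 1) ^ 2 = D + 2 ^ (2 * k + 3) := by
  subst hD
  refine ⟨by ring_nf, ?_, ?_, by ring_nf⟩ <;>
    rw [pow_add, two_mul, pow_add] <;> ring
end

section
/- Let m and k be integers with k ≥ m + 2 ≥ 4, and define D = (2^k − 2^m)² − 2·(2^k + 2^m) + 1. Then the equation z² = D + 2ⁿ has at least three solutions in nonnegative integers, namely (z, n) = (2^k − 2^m − 1, m + 2), (2^k − 2^m + 1, k + 2), (2^k + 2^m − 1, k + m + 2). -/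
/-- For `k ≥ m + 2 ≥ 4` and `D = (2^k − 2^m)² − 2·(2^k + 2^m) + 1`, the equation
`z² = D + 2ⁿ` has the three solutions
`(2^k − 2^m − 1, m+2), (2^k − 2^m + 1, k+2), (2^k + 2^m − 1, k+m+2)`. -/
theorem family_three_solutions
    (m k : ℕ) (hm : 2 ≤ m) (hk : m + 2 ≤ k)
    (D : ℤ) (hD : D = ((2 : ℤ) ^ k - 2 ^ m) ^ 2 - 2 * (2 ^ k + 2 ^ m) + 1) :
    ((2 : ℤ) ^ k - 2 ^ m - 1) ^ 2 = D + 2 ^ (m + 2) ∧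
      ((2 : ℤ) ^ k - 2 ^ m + 1) ^ 2 = D + 2 ^ (k + 2) ∧
      ((2 : ℤ) ^ k + 2 ^ m - 1) ^ 2 = D + 2 ^ (k + m + 2) := by
  subst hD
  refine ⟨?_, ?_, ?_⟩ <;> simp only [pow_add, pow_mul] <;> ring
end

section
/- Let k ≥ 1 be an integer, and set A = 2^{6k} + 1 and D = −(2^{6k+3} − 1). Then the equation z² = D + A·2ⁿ has at least five solutions in nonnegative integers, namely (z, n) = (3, 3), (2^{4k+1} − 2^{2k+1} − 1, 2k + 2), (2^{6k+1} − 1, 6k + 2), (2^{6k+2} + 1, 6k + 4), (2^{12k+3} + 2^{6k+2} − 1, 18k + 6). -/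
/-- For `k ≥ 1`, `A = 2^{6k} + 1` and `D = −(2^{6k+3} − 1)`, the equation
`z² = D + A·2ⁿ` has at least five solutions in nonnegative integers, namely at
`n = 3, 2k+2, 6k+2, 6k+4, 18k+6`. -/
theorem family_five_solutions
    (k : ℕ) (hk : 1 ≤ k) (A D : ℤ)
    (hA : A = 2 ^ (6 * k) + 1) (hD : D = -(2 ^ (6 * k + 3) - 1)) :
    (3 : ℤ) ^ 2 = D + A * 2 ^ 3 ∧
      ((2 : ℤ) ^ (4 * k + 1) - 2 ^ (2 * k + 1) - 1) ^ 2 = D + A * 2 ^ (2 * k + 2) ∧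
      ((2 : ℤ) ^ (6 * k + 1) - 1) ^ 2 = D + A * 2 ^ (6 * k + 2) ∧
      ((2 : ℤ) ^ (6 * k + 2) + 1) ^ 2 = D + A * 2 ^ (6 * k + 4) ∧
      ((2 : ℤ) ^ (12 * k + 3) + 2 ^ (6 * k + 2) - 1) ^ 2 = D + A * 2 ^ (18 * k + 6) := by
  subst hA hD
  simp only [show 6 * k = k * 6 from mul_comm .., show 4 * k = k * 4 from mul_comm ..,
    show 2 * k = k * 2 from mul_comm .., show 12 * k = k * 12 from mul_comm ..,
    show 18 * k = k * 18 from mul_comm .., pow_add, pow_mul]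
  generalize (2 : ℤ) ^ k = x
  refine ⟨by ring, by ring, by ring, by ring, by ring⟩
end
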